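/- arXiv:1702.06749 — 5 statements merged into one kernel-verified Lean document; each statement's English description precedes it below -/
import Mathlib

section
/- Let f : ℝ → ℝ be continuously differentiable and let ρ, r̄ ∈ ℝ. Then ∫_ℝ f′(v)·sgn(v − r̄)·χ_ρ(v) dv = sgn(ρ − r̄)·(f(ρ) − f(r̄)) − sgn(r̄)·(f(r̄) − f(0)). -/
open MeasureTheory

/-- The Maxwellian (kinetic) function `χ_ρ`. -/
noncomputable def chi (a : ℝ) (v : ℝ) : ℝ :=
  if 0 < v ∧ v < a then 1 else if a < v ∧ v < 0 then -1 else 0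

lemma sgn_helper (f : ℝ → ℝ) {x y : ℝ} (h : y ≤ x) :
    Real.sign (x - y) * (f x - f y) = f x - f y := by
  rcases h.eq_or_lt with rfl | h
  · simp
  · rw [Real.sign_of_pos (by linarith)]; ring

lemma sgn_helper' (f : ℝ → ℝ) {x y : ℝ} (h : y ≤ x) :
    Real.sign (y - x) * (f y - f x) = f x - f y := by
  rcases h.eq_or_lt with rfl | h
  · simp
  · rw [Real.sign_of_neg (by linarith)]; ring

lemma seg_pos (f : ℝ → ℝ) (hf : ContDiff ℝ 1 f) {c a b : ℝ} (hab : a ≤ b) (hc : c ≤ a) :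
    ∫ v in a..b, deriv f v * Real.sign (v - c) = f b - f a := by
  have hcont : Continuous (deriv f) := hf.continuous_deriv le_rfl
  have h1 : ∫ v in a..b, deriv f v * Real.sign (v - c) = ∫ v in a..b, deriv f v := by
    apply intervalIntegral.integral_congr_ae
    filter_upwards with v hv
    rw [Set.uIoc_of_le hab] at hv
    rw [Real.sign_of_pos (by linarith [hv.1] : (0:ℝ) < v - c), mul_one]
  rw [h1]
  exact intervalIntegral.integral_deriv_eq_sub
    (fun x _ => (hf.differentiable one_ne_zero).differentiableAt) (hcont.intervalIntegrable _ _)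

lemma seg_neg (f : ℝ → ℝ) (hf : ContDiff ℝ 1 f) {c a b : ℝ} (hab : a ≤ b) (hc : b ≤ c) :
    ∫ v in a..b, deriv f v * Real.sign (v - c) = -(f b - f a) := by
  have hcont : Continuous (deriv f) := hf.continuous_deriv le_rfl
  have hne : ∀ᵐ v : ℝ, v ≠ c := by
    have : (volume : Measure ℝ) {c} = 0 := measure_singleton c
    simp [ae_iff, this]
  have h1 : ∫ v in a..b, deriv f v * Real.sign (v - c) = ∫ v in a..b, -deriv f v := by
    apply intervalIntegral.integral_congr_ae
    filter_upwards [hne] with v hv hv2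
    rw [Set.uIoc_of_le hab] at hv2
    have : v < c := lt_of_le_of_ne (hv2.2.trans hc) hv
    rw [Real.sign_of_neg (by linarith : v - c < 0)]
    ring
  rw [h1, intervalIntegral.integral_neg,
    intervalIntegral.integral_deriv_eq_sub
      (fun x _ => (hf.differentiable one_ne_zero).differentiableAt) (hcont.intervalIntegrable _ _)]

lemma sign_measurable (c : ℝ) : Measurable (fun v : ℝ => Real.sign (v - c)) := by
  unfold Real.sign
  exact Measurable.ite (measurableSet_lt (by fun_prop) measurable_const)
    measurable_const (Measurable.ite (measurableSet_lt measurable_const (by fun_prop))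
      measurable_const measurable_const)

lemma integrand_intervalIntegrable (f : ℝ → ℝ) (hf : ContDiff ℝ 1 f) (c a b : ℝ) :
    IntervalIntegrable (fun v => deriv f v * Real.sign (v - c)) volume a b := by
  have hcont : Continuous (deriv f) := hf.continuous_deriv le_rfl
  have h1 : IntervalIntegrable (fun v => |deriv f v|) volume a b :=
    (hcont.abs).intervalIntegrable a b
  apply h1.mono_fun
  · exact ((hcont.measurable.mul (sign_measurable c)).aestronglyMeasurable)
  · filter_upwards with v
    simp only [Real.norm_eq_abs, abs_mul, abs_abs]
    have : |Real.sign (v - c)| ≤ 1 := by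
      rcases lt_trichotomy (v - c) 0 with h | h | h
      · rw [Real.sign_of_neg h]; norm_num
      · rw [h, Real.sign_zero]; norm_num
      · rw [Real.sign_of_pos h]; norm_num
    nlinarith [abs_nonneg (deriv f v), abs_nonneg (Real.sign (v - c))]

lemma key_le (f : ℝ → ℝ) (hf : ContDiff ℝ 1 f) {c a b : ℝ} (hab : a ≤ b) :
    ∫ v in a..b, deriv f v * Real.sign (v - c)
      = Real.sign (b - c) * (f b - f c) - Real.sign (a - c) * (f a - f c) := by
  rcases le_total c a with h1 | h1
  · rw [seg_pos f hf hab h1, sgn_helper f (h1.trans hab), sgn_helper f h1]; ring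
  · rcases le_total c b with h2 | h2
    · rw [← intervalIntegral.integral_add_adjacent_intervals
        (integrand_intervalIntegrable f hf c a c) (integrand_intervalIntegrable f hf c c b),
        seg_neg f hf h1 le_rfl, seg_pos f hf h2 le_rfl,
        sgn_helper f h2, sgn_helper' f h1]
      ring
    · rw [seg_neg f hf hab h2, sgn_helper' f h2, sgn_helper' f (hab.trans h2)]; ring

lemma key (f : ℝ → ℝ) (hf : ContDiff ℝ 1 f) (c a b : ℝ) :
    ∫ v in a..b, deriv f v * Real.sign (v - c)
      = Real.sign (b - c) * (f b - f c) - Real.sign (a - c) * (f a - f c) := by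
  rcases le_total a b with hab | hab
  · exact key_le f hf hab
  · rw [intervalIntegral.integral_symm, key_le f hf hab]; ring

/-- Let `f` be continuously differentiable and `ρ, r̄ ∈ ℝ`. Then
`∫ f′(v) sgn(v − r̄) χ_ρ(v) dv = sgn(ρ − r̄)(f ρ − f r̄) − sgn(r̄)(f r̄ − f 0)`. -/
theorem integral_deriv_sign_chi (f : ℝ → ℝ) (hf : ContDiff ℝ 1 f) (ρ rbar : ℝ) :
    ∫ v : ℝ, deriv f v * Real.sign (v - rbar) * chi ρ v
      = Real.sign (ρ - rbar) * (f ρ - f rbar) - Real.sign rbar * (f rbar - f 0) := by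
  have hmain : ∫ v : ℝ, deriv f v * Real.sign (v - rbar) * chi ρ v
      = ∫ v in (0:ℝ)..ρ, deriv f v * Real.sign (v - rbar) := by
    rcases le_total 0 ρ with hρ | hρ
    · have hchi : ∀ v, deriv f v * Real.sign (v - rbar) * chi ρ v
          = Set.indicator (Set.Ioo 0 ρ) (fun v => deriv f v * Real.sign (v - rbar)) v := by
        intro v
        simp only [chi, Set.indicator, Set.mem_Ioo]
        split_ifs with h1 h2
        · ring
        · exact absurd h2 (by push_neg; intro h; linarith)
        · ring
      simp_rw [hchi]
      rw [MeasureTheory.integral_indicator measurableSet_Ioo,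
        ← MeasureTheory.integral_Ioc_eq_integral_Ioo,
        ← intervalIntegral.integral_of_le hρ]
    · have hchi : ∀ v, deriv f v * Real.sign (v - rbar) * chi ρ v
          = -Set.indicator (Set.Ioo ρ 0) (fun v => deriv f v * Real.sign (v - rbar)) v := by
        intro v
        simp only [chi, Set.indicator, Set.mem_Ioo]
        split_ifs with h1 h2 h3
        all_goals try (exfalso; obtain ⟨ha, hb⟩ := h1; linarith)
        all_goals ring
      simp_rw [hchi]
      rw [MeasureTheory.integral_neg, MeasureTheory.integral_indicator measurableSet_Ioo,
        ← MeasureTheory.integral_Ioc_eq_integral_Ioo,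
        ← intervalIntegral.integral_of_le hρ, ← intervalIntegral.integral_symm]
  rw [hmain, key f hf rbar 0 ρ]
  have : Real.sign (0 - rbar) = -Real.sign rbar := by
    rw [zero_sub, Real.sign_neg]
  rw [this]
  ring
end

section
/- Let f : ℝ → ℝ be continuously differentiable and let ρ, r̄ ∈ ℝ. Then the limit as ε → 0⁺ of ∫_ℝ f′(v)·((v − r̄)/√((v − r̄)² + ε²))·χ_ρ(v) dv equals sgn(ρ − r̄)·(f(ρ) − f(r̄)) − sgn(r̄)·(f(r̄) − f(0)). -/
open MeasureTheory Filter Set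

lemma measurable_realSign : Measurable Real.sign := by
  unfold Real.sign
  exact Measurable.ite (measurableSet_lt measurable_id measurable_const) measurable_const
    (Measurable.ite (measurableSet_lt measurable_const measurable_id) measurable_const
      measurable_const)

lemma abs_realSign_le (x : ℝ) : |Real.sign x| ≤ 1 := by
  rcases lt_trichotomy x 0 with h | h | h
  · rw [Real.sign_of_neg h]; norm_num
  · simp [h]
  · rw [Real.sign_of_pos h]; norm_num

lemma div_abs_eq_sign {x : ℝ} (hx : x ≠ 0) : x / |x| = Real.sign x := by
  rcases lt_trichotomy x 0 with h | h | h
  · rw [Real.sign_of_neg h, abs_of_neg h, div_neg, div_self hx]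
  · exact absurd h hx
  · rw [Real.sign_of_pos h, abs_of_pos h, div_self hx]

lemma sign_intervalIntegrable (f : ℝ → ℝ) (hf : ContDiff ℝ 1 f) (rbar p q : ℝ) :
    IntervalIntegrable (fun v => deriv f v * Real.sign (v - rbar)) volume p q := by
  have hcont : Continuous (deriv f) := hf.continuous_deriv le_rfl
  rw [intervalIntegrable_iff]
  have h1 : IntegrableOn (fun v => ‖deriv f v‖) (Set.uIoc p q) volume :=
    intervalIntegrable_iff.mp ((hcont.intervalIntegrable p q).norm)
  refine h1.mono' ?_ (ae_of_all _ fun v => ?_)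
  · exact (hcont.measurable.mul
      (measurable_realSign.comp (measurable_id.sub measurable_const))).aestronglyMeasurable
  · rw [Real.norm_eq_abs, Real.norm_eq_abs, abs_mul]
    calc |deriv f v| * |Real.sign (v - rbar)| ≤ |deriv f v| * 1 :=
          mul_le_mul_of_nonneg_left (abs_realSign_le _) (abs_nonneg _)
      _ = |deriv f v| := mul_one _

lemma integral_deriv_sign_aux (f : ℝ → ℝ) (hf : ContDiff ℝ 1 f) (rbar c : ℝ) :
    ∫ v in rbar..c, deriv f v * Real.sign (v - rbar) =
      Real.sign (c - rbar) * (f c - f rbar) := by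
  have hcont : Continuous (deriv f) := hf.continuous_deriv le_rfl
  have hder : ∫ v in rbar..c, deriv f v = f c - f rbar :=
    intervalIntegral.integral_deriv_eq_sub (fun x _ => hf.differentiable one_ne_zero x)
      (hcont.intervalIntegrable _ _)
  rcases lt_trichotomy rbar c with h | h | h
  · rw [Real.sign_of_pos (by linarith), one_mul, ← hder]
    apply intervalIntegral.integral_congr_ae
    refine ae_of_all _ fun v hv => ?_
    rw [Set.uIoc_of_le h.le] at hv
    rw [Real.sign_of_pos (by linarith [hv.1]), mul_one]
  · subst h
    simp
  · rw [Real.sign_of_neg (by linarith)]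
    have hae : ∀ᵐ v : ℝ, v ≠ rbar := by
      filter_upwards [compl_mem_ae_iff.mpr (measure_singleton rbar)] with v hv
      simpa using hv
    have : ∫ v in rbar..c, deriv f v * Real.sign (v - rbar)
        = ∫ v in rbar..c, -(deriv f v) := by
      apply intervalIntegral.integral_congr_ae
      filter_upwards [hae] with v hv hmem
      rw [Set.uIoc_of_ge h.le] at hmem
      have : v - rbar < 0 := by
        rcases lt_or_eq_of_le hmem.2 with h' | h'
        · linarith
        · exact absurd h' hv
      rw [Real.sign_of_neg this]; ring
    rw [this, intervalIntegral.integral_neg, hder]; ring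

lemma integral_deriv_sign (f : ℝ → ℝ) (hf : ContDiff ℝ 1 f) (rbar a b : ℝ) :
    ∫ v in a..b, deriv f v * Real.sign (v - rbar) =
      Real.sign (b - rbar) * (f b - f rbar) - Real.sign (a - rbar) * (f a - f rbar) := by
  rw [← intervalIntegral.integral_add_adjacent_intervals
    (sign_intervalIntegrable f hf rbar a rbar) (sign_intervalIntegrable f hf rbar rbar b),
    intervalIntegral.integral_symm rbar a, integral_deriv_sign_aux f hf,
    integral_deriv_sign_aux f hf]
  ring

lemma integral_chi_eq (g : ℝ → ℝ) (ρ : ℝ) :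
    (∫ v : ℝ, g v * chi ρ v) = ∫ v in (0:ℝ)..ρ, g v := by
  rcases le_or_gt 0 ρ with hρ | hρ
  · have heq : ∀ v, g v * chi ρ v = (Set.Ioo (0:ℝ) ρ).indicator g v := by
      intro v
      unfold chi
      by_cases h1 : 0 < v ∧ v < ρ
      · rw [if_pos h1, Set.indicator_of_mem (show v ∈ Set.Ioo (0:ℝ) ρ from h1), mul_one]
      · rw [if_neg h1, if_neg (by rintro ⟨h2, h3⟩; linarith), mul_zero,
          Set.indicator_of_notMem (show v ∉ Set.Ioo (0:ℝ) ρ from h1)]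
    rw [show (fun v => g v * chi ρ v) = (Set.Ioo (0:ℝ) ρ).indicator g from funext heq,
      integral_indicator measurableSet_Ioo, ← integral_Ioc_eq_integral_Ioo,
      intervalIntegral.integral_of_le hρ]
  · have heq : ∀ v, g v * chi ρ v = -((Set.Ioo ρ (0:ℝ)).indicator g v) := by
      intro v
      unfold chi
      by_cases h1 : ρ < v ∧ v < 0
      · rw [if_neg (by rintro ⟨h2, h3⟩; linarith), if_pos h1, Set.indicator_of_mem (show v ∈ Set.Ioo ρ (0:ℝ) from h1)]
        ring
      · rw [if_neg (by rintro ⟨h2, h3⟩; linarith), if_neg h1, mul_zero,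
          Set.indicator_of_notMem (show v ∉ Set.Ioo ρ (0:ℝ) from h1), neg_zero]
    rw [show (fun v => g v * chi ρ v) = fun v => -((Set.Ioo ρ (0:ℝ)).indicator g v)
        from funext heq,
      integral_neg, integral_indicator measurableSet_Ioo, ← integral_Ioc_eq_integral_Ioo,
      ← intervalIntegral.integral_of_le hρ.le, intervalIntegral.integral_symm ρ 0]

/-- Let `f` be continuously differentiable and `ρ, r̄ ∈ ℝ`. Then, as `ε → 0⁺`,
`∫ f′(v) ((v − r̄)/√((v − r̄)² + ε²)) χ_ρ(v) dv` tends to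
`sgn(ρ − r̄)(f ρ − f r̄) − sgn(r̄)(f r̄ − f 0)`. -/
theorem tendsto_Q_eps (f : ℝ → ℝ) (hf : ContDiff ℝ 1 f) (ρ rbar : ℝ) :
    Tendsto
      (fun ε : ℝ =>
        ∫ v : ℝ, deriv f v * ((v - rbar) / Real.sqrt ((v - rbar) ^ 2 + ε ^ 2)) * chi ρ v)
      (nhdsWithin 0 (Ioi 0))
      (nhds (Real.sign (ρ - rbar) * (f ρ - f rbar) - Real.sign rbar * (f rbar - f 0))) := by
  have hcont : Continuous (deriv f) := hf.continuous_deriv le_rfl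
  have heq : ∀ ε : ℝ,
      (∫ v : ℝ, deriv f v * ((v - rbar) / Real.sqrt ((v - rbar) ^ 2 + ε ^ 2)) * chi ρ v)
        = ∫ v in (0:ℝ)..ρ, deriv f v * ((v - rbar) / Real.sqrt ((v - rbar) ^ 2 + ε ^ 2)) :=
    fun ε => integral_chi_eq _ ρ
  simp only [heq]
  have hlim_eq : Real.sign (ρ - rbar) * (f ρ - f rbar) - Real.sign rbar * (f rbar - f 0)
      = ∫ v in (0:ℝ)..ρ, deriv f v * Real.sign (v - rbar) := by
    rw [integral_deriv_sign f hf rbar 0 ρ, show (0:ℝ) - rbar = -rbar by ring, Real.sign_neg]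
    ring
  rw [hlim_eq]
  apply intervalIntegral.tendsto_integral_filter_of_dominated_convergence
    (fun v => ‖deriv f v‖)
  · refine Eventually.of_forall fun ε => ?_
    exact (hcont.measurable.mul
      (((measurable_id.sub measurable_const).div
        (Real.continuous_sqrt.measurable.comp (((measurable_id.sub measurable_const).pow_const 2).add
          measurable_const))))).aestronglyMeasurable
  · filter_upwards [self_mem_nhdsWithin] with ε (hε : ε ∈ Ioi 0)
    refine ae_of_all _ fun v _ => ?_
    rw [Real.norm_eq_abs, Real.norm_eq_abs, abs_mul]
    have hε' : (0:ℝ) < ε := hε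
    have hpos : 0 < Real.sqrt ((v - rbar) ^ 2 + ε ^ 2) :=
      Real.sqrt_pos.mpr (by positivity)
    have hle : |v - rbar| ≤ Real.sqrt ((v - rbar) ^ 2 + ε ^ 2) := by
      rw [← Real.sqrt_sq_eq_abs]
      exact Real.sqrt_le_sqrt (by nlinarith [sq_nonneg ε, hε.out])
    have hb : |(v - rbar) / Real.sqrt ((v - rbar) ^ 2 + ε ^ 2)| ≤ 1 := by
      rw [abs_div, abs_of_pos hpos]
      exact div_le_one_of_le₀ hle hpos.le
    calc |deriv f v| * |(v - rbar) / Real.sqrt ((v - rbar) ^ 2 + ε ^ 2)|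
        ≤ |deriv f v| * 1 := mul_le_mul_of_nonneg_left hb (abs_nonneg _)
      _ = |deriv f v| := mul_one _
  · exact (hcont.intervalIntegrable 0 ρ).norm
  · have hae : ∀ᵐ v : ℝ, v ≠ rbar := by
      filter_upwards [compl_mem_ae_iff.mpr (measure_singleton rbar)] with v hv
      simpa using hv
    filter_upwards [hae] with v hv _
    have hx : v - rbar ≠ 0 := sub_ne_zero.mpr hv
    have habs : |v - rbar| ≠ 0 := abs_ne_zero.mpr hx
    have hc : ContinuousAt
        (fun ε : ℝ => deriv f v * ((v - rbar) / Real.sqrt ((v - rbar) ^ 2 + ε ^ 2))) 0 := by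
      apply continuousAt_const.mul
      apply continuousAt_const.div
      · exact (Real.continuous_sqrt.comp
          (continuous_const.add ((continuous_id.pow 2)))).continuousAt
      · simp only [ne_eq]
        rw [show (0:ℝ) ^ 2 = 0 by norm_num, add_zero, Real.sqrt_sq_eq_abs]
        exact habs
    have := hc.tendsto.mono_left (nhdsWithin_le_nhds (s := Set.Ioi (0:ℝ)))
    convert this using 2
    rw [show (0:ℝ) ^ 2 = 0 by norm_num, add_zero, Real.sqrt_sq_eq_abs,
      div_abs_eq_sign hx]
end

section
/- Let ε > 0, T > 0, and let U : [0, T] → ℝ be bounded and satisfy, for every t ∈ [0, T], U(t) ≤ (1 − e^{−t/ε})·sup_{s ∈ [0, t]} U(s) + e^{−t/ε}·U(0). Then U(t) ≤ U(0) for every t ∈ [0, T]. -/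
open Set

/-- Let `ε > 0`, `T > 0`, and let `U : [0, T] → ℝ` be bounded and satisfy
`U t ≤ (1 − e^{−t/ε}) sup_{s ∈ [0,t]} U s + e^{−t/ε} U 0` for every `t ∈ [0, T]`.
Then `U t ≤ U 0` for every `t ∈ [0, T]`. -/
theorem iteration_lemma (ε T : ℝ) (hε : 0 < ε) (hT : 0 < T) (U : ℝ → ℝ)
    (hbdd : ∃ M : ℝ, ∀ t ∈ Icc (0 : ℝ) T, |U t| ≤ M)
    (hineq : ∀ t ∈ Icc (0 : ℝ) T,
      U t ≤ (1 - Real.exp (-t / ε)) * sSup (U '' Icc (0 : ℝ) t) + Real.exp (-t / ε) * U 0) :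
    ∀ t ∈ Icc (0 : ℝ) T, U t ≤ U 0 := by
  obtain ⟨M, hM⟩ := hbdd
  have hBdd : BddAbove (U '' Icc (0 : ℝ) T) := by
    refine ⟨M, fun y hy => ?_⟩
    obtain ⟨x, hx, rfl⟩ := hy
    exact (le_abs_self _).trans (hM x hx)
  set S := sSup (U '' Icc (0 : ℝ) T) with hS
  have hle : ∀ t ∈ Icc (0 : ℝ) T, U t ≤ S := fun t ht => le_csSup hBdd ⟨t, ht, rfl⟩
  have key : S ≤ U 0 := by
    by_contra h
    push_neg at h
    have h1 : ∀ t ∈ Icc (0 : ℝ) T, U t ≤ S - Real.exp (-T / ε) * (S - U 0) := by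
      intro t ht
      have hsub : U '' Icc (0 : ℝ) t ⊆ U '' Icc (0 : ℝ) T :=
        image_mono (Icc_subset_Icc le_rfl ht.2)
      have hne : (U '' Icc (0 : ℝ) t).Nonempty := ⟨U 0, 0, ⟨le_rfl, ht.1⟩, rfl⟩
      have hst : sSup (U '' Icc (0 : ℝ) t) ≤ S := csSup_le_csSup hBdd hne hsub
      have hexp : Real.exp (-T / ε) ≤ Real.exp (-t / ε) :=
        Real.exp_le_exp.2 ((div_le_div_iff_of_pos_right hε).2 (by linarith [ht.2]))
      have hexp1 : Real.exp (-t / ε) ≤ 1 :=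
        Real.exp_le_one_iff.2 (div_nonpos_of_nonpos_of_nonneg (by linarith [ht.1]) hε.le)
      have := hineq t ht
      nlinarith [Real.exp_pos (-t / ε)]
    have h2 : S ≤ S - Real.exp (-T / ε) * (S - U 0) := by
      refine csSup_le ⟨U 0, 0, ⟨le_rfl, hT.le⟩, rfl⟩ ?_
      rintro y ⟨x, hx, rfl⟩
      exact h1 x hx
    nlinarith [Real.exp_pos (-T / ε), h]
  exact fun t ht => (hle t ht).trans key
end

section
/- Let u : ℝ → ℝ be Lebesgue integrable with u(v) ∈ [0, 1] for all v > 0 and u(v) ∈ [−1, 0] for all v < 0. Set ρ = ∫_ℝ u(v) dv and define m : ℝ → ℝ by m(v) = ∫_{−∞}^v (χ_ρ(r) − u(r)) dr. Then m(v) ≥ 0 for every v ∈ ℝ, and m(v) → 0 as v → −∞ and as v → +∞. -/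
open MeasureTheory Filter Set

lemma chi_eq_indicator (a : ℝ) : chi a = fun v =>
    (Ioo (0:ℝ) a).indicator (fun _ => (1:ℝ)) v - (Ioo a (0:ℝ)).indicator (fun _ => (1:ℝ)) v := by
  funext v
  simp only [chi, Set.indicator, Set.mem_Ioo]
  split_ifs with h1 h2 <;> norm_num <;> try (exfalso; omega)
  all_goals linarith [h1.1, h1.2]

lemma chi_integrable (a : ℝ) : Integrable (chi a) := by
  rw [chi_eq_indicator]
  apply Integrable.sub <;>
  · rw [integrable_indicator_iff measurableSet_Ioo]
    exact integrableOn_const (by simp [Real.volume_Ioo, ENNReal.ofReal_lt_top])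

lemma chi_integral (a : ℝ) : ∫ v : ℝ, chi a v = a := by
  rw [chi_eq_indicator]
  rw [integral_sub, integral_indicator measurableSet_Ioo, integral_indicator measurableSet_Ioo]
  · simp only [setIntegral_const, smul_eq_mul, mul_one, Real.volume_Ioo,
      ENNReal.toReal_ofReal']
    rcases le_total 0 a with h | h <;>
      simp [max_eq_left, max_eq_right, h, sub_nonneg.mpr h, sub_nonpos.mpr h] <;> linarith
  · rw [integrable_indicator_iff measurableSet_Ioo]
    exact integrableOn_const (by simp [Real.volume_Ioo])
  · rw [integrable_indicator_iff measurableSet_Ioo]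
    exact integrableOn_const (by simp [Real.volume_Ioo])

/-- Let `u : ℝ → ℝ` be integrable with `u v ∈ [0,1]` for `v > 0` and `u v ∈ [−1,0]`
for `v < 0`. Set `ρ = ∫ u` and `m v = ∫_{−∞}^v (χ_ρ(r) − u r) dr`. Then `m v ≥ 0` for
every `v`, and `m v → 0` as `v → −∞` and as `v → +∞`. -/
theorem defect_measure_nonneg (u : ℝ → ℝ) (hu : Integrable u)
    (hpos : ∀ v : ℝ, 0 < v → u v ∈ Icc (0 : ℝ) 1)
    (hneg : ∀ v : ℝ, v < 0 → u v ∈ Icc (-1 : ℝ) 0)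
    (ρ : ℝ) (hρ : ρ = ∫ v : ℝ, u v)
    (m : ℝ → ℝ) (hm : ∀ v : ℝ, m v = ∫ r in Iic v, (chi ρ r - u r)) :
    (∀ v : ℝ, 0 ≤ m v) ∧
    Tendsto m atBot (nhds 0) ∧ Tendsto m atTop (nhds 0) := by
  set g : ℝ → ℝ := fun r => chi ρ r - u r with hg
  have hgint : Integrable g := (chi_integrable ρ).sub hu
  have hg0 : ∫ r : ℝ, g r = 0 := by
    rw [integral_sub (chi_integrable ρ) hu, chi_integral, ← hρ, sub_self]
  -- a.e. exclusion of the two bad points 0 and ρ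
  have hae : ∀ᵐ r : ℝ, r ∉ ({0, ρ} : Set ℝ) := by
    have : volume ({0, ρ} : Set ℝ) = 0 := Set.Finite.measure_zero (by simp) volume
    exact MeasureTheory.measure_eq_zero_iff_ae_notMem.mp this
  have hgpos : ∀ r : ℝ, r ∉ ({0, ρ} : Set ℝ) → r ≤ ρ → 0 ≤ g r := by
    intro r hr hrρ
    simp only [Set.mem_insert_iff, Set.mem_singleton_iff, not_or] at hr
    have hrρ' : r < ρ := lt_of_le_of_ne hrρ hr.2
    simp only [hg, chi]
    split_ifs with h1 h2
    · have := hpos r h1.1; linarith [this.2]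
    · linarith [h2.1]
    · rcases lt_trichotomy r 0 with h | h | h
      · have := hneg r h; linarith [this.2]
      · exact absurd h hr.1
      · exact absurd ⟨h, hrρ'⟩ h1
  have hgneg : ∀ r : ℝ, r ∉ ({0, ρ} : Set ℝ) → ρ ≤ r → g r ≤ 0 := by
    intro r hr hrρ
    simp only [Set.mem_insert_iff, Set.mem_singleton_iff, not_or] at hr
    have hrρ' : ρ < r := lt_of_le_of_ne hrρ (Ne.symm hr.2)
    simp only [hg, chi]
    split_ifs with h1 h2
    · linarith [h1.2]
    · have := hneg r h2.2; linarith [this.1]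
    · rcases lt_trichotomy r 0 with h | h | h
      · exact absurd ⟨hrρ', h⟩ h2
      · exact absurd h hr.1
      · have := hpos r h; linarith [this.1]
  refine ⟨?_, ?_, ?_⟩
  · intro v
    rw [hm]
    rcases le_total v ρ with hv | hv
    · refine setIntegral_nonneg_ae measurableSet_Iic ?_
      filter_upwards [hae] with r hr hrv
      exact hgpos r hr (le_trans hrv hv)
    · have hsplit := intervalIntegral.integral_Iic_add_Ioi (f := g) (b := v) hgint.integrableOn hgint.integrableOn
      have hIoi : ∫ r in Ioi v, g r ≤ 0 := by
        refine setIntegral_nonpos_ae measurableSet_Ioi ?_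
        filter_upwards [hae] with r hr hrv
        exact hgneg r hr (le_trans hv (le_of_lt hrv))
      have : ∫ r in Iic v, g r = -(∫ r in Ioi v, g r) := by
        rw [hg0] at hsplit; linarith
      rw [this]; linarith
  · have hcov : AECover (volume : Measure ℝ) atBot (fun v : ℝ => Ici v) :=
      aecover_Ici tendsto_id
    have h1 : Tendsto (fun v : ℝ => ∫ r in Ici v, g r) atBot (nhds 0) := by
      rw [← hg0]
      exact hcov.integral_tendsto_of_countably_generated hgint
    have h2 : ∀ v : ℝ, m v = -(∫ r in Ici v, g r) := by
      intro v
      have hsplit := intervalIntegral.integral_Iio_add_Ici (f := g) (b := v) hgint.integrableOn hgint.integrableOn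
      rw [hg0] at hsplit
      rw [hm, integral_Iic_eq_integral_Iio]; linarith
    have := h1.neg
    rw [neg_zero] at this
    exact Tendsto.congr (fun v => (h2 v).symm) this
  · have hcov : AECover (volume : Measure ℝ) atTop (fun v : ℝ => Iic v) :=
      aecover_Iic tendsto_id
    have h1 : Tendsto (fun v : ℝ => ∫ r in Iic v, g r) atTop (nhds 0) := by
      rw [← hg0]
      exact hcov.integral_tendsto_of_countably_generated hgint
    exact Tendsto.congr (fun v => (hm v).symm) h1
end

section
/- Let c ≥ 0 and y > 0. Define g : [0, ∞) → [0, ∞) by g(y) = y²·e^{y²}, let g⁻¹ denote its inverse (g is a strictly increasing bijection of [0, ∞) onto itself), and set Y(t) = g⁻¹(g(y)·e^{2ct}) for t ≥ 0. Then Y(0) = y and, for every t ≥ 0, Y is differentiable at t with derivative Y′(t) = c·Y(t)/(1 + Y(t)²). -/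
open Set

/-- Let `c ≥ 0`, `y > 0`, `g y = y² e^{y²}` (a strictly increasing bijection of `[0,∞)`
onto itself) with inverse `ginv`, and set `Y t = ginv (g y · e^{2ct})`. Then `Y 0 = y`
and for every `t ≥ 0`, `Y` is differentiable at `t` with `Y′(t) = c Y(t)/(1 + Y(t)²)`. -/
theorem ode_explicit_solution (c y : ℝ) (hc : 0 ≤ c) (hy : 0 < y)
    (g ginv : ℝ → ℝ) (hg : ∀ z, g z = z ^ 2 * Real.exp (z ^ 2))
    (hbij : Set.BijOn g (Ici 0) (Ici 0))
    (hinv : Set.InvOn ginv g (Ici 0) (Ici 0))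
    (Y : ℝ → ℝ) (hY : ∀ t, Y t = ginv (g y * Real.exp (2 * c * t))) :
    Y 0 = y ∧
    ∀ t : ℝ, 0 ≤ t → HasDerivAt Y (c * Y t / (1 + Y t ^ 2)) t := by
  have hgy : 0 < g y := by rw [hg]; positivity
  -- g is strictly monotone on [0,∞)
  have hmono : StrictMonoOn g (Ici 0) := by
    intro u hu v hv huv
    rw [hg, hg]
    have hu0 : (0:ℝ) ≤ u := hu
    have hsq : u ^ 2 < v ^ 2 := by nlinarith
    have he : Real.exp (u ^ 2) < Real.exp (v ^ 2) := Real.exp_lt_exp.mpr hsq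
    have h1 : u ^ 2 * Real.exp (u ^ 2) ≤ u ^ 2 * Real.exp (v ^ 2) :=
      mul_le_mul_of_nonneg_left he.le (sq_nonneg u)
    have h2 : u ^ 2 * Real.exp (v ^ 2) < v ^ 2 * Real.exp (v ^ 2) :=
      mul_lt_mul_of_pos_right hsq (Real.exp_pos _)
    linarith
  -- ginv maps [0,∞) into [0,∞)
  have hmaps : MapsTo ginv (Ici 0) (Ici 0) := by
    intro a ha
    obtain ⟨x, hx, hxa⟩ := hbij.surjOn ha
    rw [← hxa, hinv.1 hx]
    exact hx
  have h0 : Y 0 = y := by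
    rw [hY 0]
    simp only [mul_zero, Real.exp_zero, mul_one]
    exact hinv.1 (mem_Ici.mpr hy.le)
  refine ⟨h0, fun t ht => ?_⟩
  set a : ℝ := g y * Real.exp (2 * c * t) with ha_def
  have ha : 0 < a := mul_pos hgy (Real.exp_pos _)
  set z : ℝ := ginv a with hz_def
  have hzmem : z ∈ Ici (0:ℝ) := hmaps (mem_Ici.mpr ha.le)
  have hga : g z = a := hinv.2 (mem_Ici.mpr ha.le)
  have hzpos : 0 < z := by
    rcases eq_or_lt_of_le (mem_Ici.mp hzmem) with h | h
    · exfalso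
      have : g 0 = 0 := by rw [hg]; simp
      rw [← h, this] at hga
      linarith
    · exact h
  -- derivative of g at z
  have hgderiv : HasDerivAt g (2 * z * (1 + z ^ 2) * Real.exp (z ^ 2)) z := by
    have hw2 : HasDerivAt (fun w : ℝ => w ^ 2) (2 * z) z := by
      simpa using hasDerivAt_pow 2 z
    have hprod := hw2.mul hw2.exp
    have hgeq : (fun w : ℝ => w ^ 2 * Real.exp (w ^ 2)) = g := funext fun w => (hg w).symm
    rw [show ((fun w : ℝ => w ^ 2) * fun x => Real.exp (x ^ 2)) = g from hgeq] at hprod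
    refine hprod.congr_deriv ?_
    ring
  have hE : (0:ℝ) < Real.exp (z ^ 2) := Real.exp_pos _
  have hne : 2 * z * (1 + z ^ 2) * Real.exp (z ^ 2) ≠ 0 := by positivity
  -- ginv is monotone on (0,∞)
  have hginv_mono : MonotoneOn ginv (Ioi 0) := by
    intro u hu v hv huv
    by_contra hlt
    push_neg at hlt
    have hu' : ginv u ∈ Ici (0:ℝ) := hmaps (mem_Ici.mpr (le_of_lt hu))
    have hv' : ginv v ∈ Ici (0:ℝ) := hmaps (mem_Ici.mpr (le_of_lt hv))
    have := hmono hv' hu' hlt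
    rw [hinv.2 (mem_Ici.mpr (le_of_lt hu)), hinv.2 (mem_Ici.mpr (le_of_lt hv))] at this
    linarith
  -- image of (0,∞) under ginv contains (0,∞)
  have hsub : Ioi (0:ℝ) ⊆ ginv '' Ioi 0 := by
    intro w hw
    have hgw : g w ∈ Ioi (0:ℝ) := by
      rw [hg]
      exact mem_Ioi.mpr (by have : (0:ℝ) < w := hw; positivity)
    exact ⟨g w, hgw, hinv.1 (mem_Ici.mpr (le_of_lt hw))⟩
  have hcont : ContinuousAt ginv a := by
    apply continuousAt_of_monotoneOn_of_image_mem_nhds hginv_mono (Ioi_mem_nhds ha)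
    exact Filter.mem_of_superset (Ioi_mem_nhds (by exact hzpos : (0:ℝ) < ginv a)) hsub
  have hev : ∀ᶠ u in nhds a, g (ginv u) = u := by
    filter_upwards [Ioi_mem_nhds ha] with u hu
    exact hinv.2 (mem_Ici.mpr (le_of_lt hu))
  have hDginv : HasDerivAt ginv (2 * z * (1 + z ^ 2) * Real.exp (z ^ 2))⁻¹ a :=
    HasDerivAt.of_local_left_inverse hcont hgderiv hne hev
  -- inner function derivative
  have hinner : HasDerivAt (fun s : ℝ => g y * Real.exp (2 * c * s))
      (g y * (Real.exp (2 * c * t) * (2 * c))) t := by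
    have h1 : HasDerivAt (fun s : ℝ => 2 * c * s) (2 * c) t := by
      simpa using (hasDerivAt_id t).const_mul (2 * c)
    exact (h1.exp).const_mul (g y)
  have hcomp := hDginv.comp t hinner
  have hYeq : Y = fun s : ℝ => ginv (g y * Real.exp (2 * c * s)) := funext hY
  have hYt : Y t = z := hY t
  rw [hYt, hYeq]
  refine HasDerivAt.congr_deriv hcomp ?_
  have key : g y * Real.exp (2 * c * t) = z ^ 2 * Real.exp (z ^ 2) := by
    rw [← hg z, hga]
  have h1z : (0:ℝ) < 1 + z ^ 2 := by positivity
  have hrw : g y * (Real.exp (2 * c * t) * (2 * c)) = 2 * c * (z ^ 2 * Real.exp (z ^ 2)) := by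
    rw [← key]; ring
  rw [hrw]
  field_simp
end
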